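/- Let u be analytic on the unit disk D and φ an analytic self-map of D. For w ∈ D define f_{φ(w)}(z) = σ_{φ(w)}(z)^2 - φ(w)·σ_{φ(w)}(z), where σ_a(z) = (a-z)/(1-conj(a)z). Then the Bloch seminorm of z ↦ u(z) f_{φ(w)}(φ(z)) is at least (1-|w|^2)|u(w)|·|φ'(w)|·|φ(w)|/(1-|φ(w)|^2). -/

import Mathlib

open Complex Metric

theorem bloch_lower_bound_test_function (u φ : ℂ → ℂ)
    (hu : DifferentiableOn ℂ u (ball (0 : ℂ) 1))
    (hφ : DifferentiableOn ℂ φ (ball (0 : ℂ) 1))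
    (hφmap : ∀ z : ℂ, ‖z‖ < 1 → ‖φ z‖ < 1)
    (w : ℂ) (hw : ‖w‖ < 1)
    (M : ℝ)
    (hM : ∀ z : ℂ, ‖z‖ < 1 →
      (1 - ‖z‖ ^ 2)
          * ‖deriv (fun ζ =>
              u ζ * (((φ w - φ ζ) / (1 - (starRingEnd ℂ) (φ w) * φ ζ)) ^ 2
                - φ w * ((φ w - φ ζ) / (1 - (starRingEnd ℂ) (φ w) * φ ζ)))) z‖ ≤ M) :
    (1 - ‖w‖ ^ 2) * ‖u w‖ * ‖deriv φ w‖
        * ‖φ w‖ / (1 - ‖φ w‖ ^ 2) ≤ M := by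
  set a : ℂ := φ w with ha
  have hwb : w ∈ ball (0 : ℂ) 1 := by simpa [mem_ball_zero_iff] using hw
  have hau : DifferentiableAt ℂ u w :=
    (hu w hwb).differentiableAt (isOpen_ball.mem_nhds hwb)
  have haφ : DifferentiableAt ℂ φ w :=
    (hφ w hwb).differentiableAt (isOpen_ball.mem_nhds hwb)
  have haa : ‖a‖ < 1 := hφmap w hw
  set d : ℂ := 1 - (starRingEnd ℂ) a * a with hd
  have hdr : d = ((1 - ‖a‖ ^ 2 : ℝ) : ℂ) := by
    rw [hd]
    push_cast
    rw [mul_comm, Complex.mul_conj]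
    norm_cast
    rw [← Complex.sq_norm]
  have hdpos : (0 : ℝ) < 1 - ‖a‖ ^ 2 := by
    nlinarith [norm_nonneg a]
  have hdne : d ≠ 0 := by
    rw [hdr]
    exact_mod_cast ne_of_gt hdpos
  -- derivative of σ at a
  have h1 : HasDerivAt (fun ζ : ℂ => a - ζ) (-1) a := (hasDerivAt_id a).const_sub a
  have h2 : HasDerivAt (fun ζ : ℂ => 1 - (starRingEnd ℂ) a * ζ) (-((starRingEnd ℂ) a)) a := by
    simpa using ((hasDerivAt_id a).const_mul ((starRingEnd ℂ) a)).const_sub 1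
  have hσ : HasDerivAt (fun ζ : ℂ => (a - ζ) / (1 - (starRingEnd ℂ) a * ζ))
      (((-1) * d - (a - a) * (-((starRingEnd ℂ) a))) / d ^ 2) a := h1.div h2 hdne
  have hg : HasDerivAt (fun ζ : ℂ => ((a - ζ) / (1 - (starRingEnd ℂ) a * ζ)) ^ 2
      - a * ((a - ζ) / (1 - (starRingEnd ℂ) a * ζ)))
      ((2 : ℕ) * ((a - a) / (1 - (starRingEnd ℂ) a * a)) ^ 1
          * (((-1) * d - (a - a) * (-((starRingEnd ℂ) a))) / d ^ 2)
        - a * (((-1) * d - (a - a) * (-((starRingEnd ℂ) a))) / d ^ 2)) a :=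
    (hσ.pow 2).sub (hσ.const_mul a)
  have hcomp : HasDerivAt (fun z : ℂ => ((a - φ z) / (1 - (starRingEnd ℂ) a * φ z)) ^ 2
      - a * ((a - φ z) / (1 - (starRingEnd ℂ) a * φ z)))
      (((2 : ℕ) * ((a - a) / (1 - (starRingEnd ℂ) a * a)) ^ 1
          * (((-1) * d - (a - a) * (-((starRingEnd ℂ) a))) / d ^ 2)
        - a * (((-1) * d - (a - a) * (-((starRingEnd ℂ) a))) / d ^ 2)) * deriv φ w) w :=
    HasDerivAt.comp w hg haφ.hasDerivAt
  have hF : HasDerivAt (fun z : ℂ => u z * (((a - φ z) / (1 - (starRingEnd ℂ) a * φ z)) ^ 2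
      - a * ((a - φ z) / (1 - (starRingEnd ℂ) a * φ z))))
      (deriv u w * (((a - φ w) / (1 - (starRingEnd ℂ) a * φ w)) ^ 2
          - a * ((a - φ w) / (1 - (starRingEnd ℂ) a * φ w)))
        + u w * (((2 : ℕ) * ((a - a) / (1 - (starRingEnd ℂ) a * a)) ^ 1
          * (((-1) * d - (a - a) * (-((starRingEnd ℂ) a))) / d ^ 2)
        - a * (((-1) * d - (a - a) * (-((starRingEnd ℂ) a))) / d ^ 2)) * deriv φ w)) w :=
    hau.hasDerivAt.mul hcomp
  have hDval : (deriv u w * (((a - φ w) / (1 - (starRingEnd ℂ) a * φ w)) ^ 2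
          - a * ((a - φ w) / (1 - (starRingEnd ℂ) a * φ w)))
        + u w * (((2 : ℕ) * ((a - a) / (1 - (starRingEnd ℂ) a * a)) ^ 1
          * (((-1) * d - (a - a) * (-((starRingEnd ℂ) a))) / d ^ 2)
        - a * (((-1) * d - (a - a) * (-((starRingEnd ℂ) a))) / d ^ 2)) * deriv φ w))
      = u w * (a / d) * deriv φ w := by
    rw [← ha]
    field_simp
    ring
  have key := hM w hw
  rw [hF.deriv, hDval] at key
  have habs : ‖u w * (a / d) * deriv φ w‖
      = ‖u w‖ * (‖a‖ / (1 - ‖a‖ ^ 2)) * ‖deriv φ w‖ := by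
    rw [norm_mul, norm_mul, norm_div, hdr, Complex.norm_real, Real.norm_eq_abs, abs_of_pos hdpos]
  rw [habs] at key
  calc (1 - ‖w‖ ^ 2) * ‖u w‖ * ‖deriv φ w‖
        * ‖φ w‖ / (1 - ‖φ w‖ ^ 2)
      = (1 - ‖w‖ ^ 2) * (‖u w‖
          * (‖a‖ / (1 - ‖a‖ ^ 2)) * ‖deriv φ w‖) := by
        rw [← ha]; field_simp
    _ ≤ M := key
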